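/- Let W be a real random variable whose distribution has a Lebesgue density f that is even and nonincreasing on [0,∞), and let ρ : ℝ → ℝ satisfy condition (A3). Then for every α ∈ ℝ and every s > 0, E[ρ((W − α)/s)] ≥ E[ρ(W/s)]. -/

import Mathlib

open MeasureTheory ProbabilityTheory Filter Set


lemma stmt1_f_abs {f : ℝ → ℝ} (hf_even : ∀ x, f (-x) = f x) (x : ℝ) : f x = f |x| := by
  rcases le_or_gt 0 x with h | h
  · rw [abs_of_nonneg h]
  · rw [abs_of_neg h, ← hf_even x]

lemma stmt1_core (f : ℝ → ℝ) (hf_even : ∀ x, f (-x) = f x) (hf_anti : AntitoneOn f (Set.Ici 0))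
    (c α : ℝ) (hc : 0 ≤ c) :
    (volume.withDensity fun x => ENNReal.ofReal (f x)) (Icc (α - c) (α + c))
      ≤ (volume.withDensity fun x => ENNReal.ofReal (f x)) (Icc (-c) c) := by
  set ν := volume.withDensity fun x => ENNReal.ofReal (f x) with hν
  set A : Set ℝ := Icc (α - c) (α + c)
  set B : Set ℝ := Icc (-c) c
  have hA : MeasurableSet A := measurableSet_Icc
  have hB : MeasurableSet B := measurableSet_Icc
  have hvolA : volume A = ENNReal.ofReal (2 * c) := by
    rw [Real.volume_Icc]; ring_nf
  have hvolB : volume B = ENNReal.ofReal (2 * c) := by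
    rw [Real.volume_Icc]; ring_nf
  have hfin : volume (A ∩ B) ≠ ⊤ := by
    refine ne_top_of_le_ne_top ?_ (measure_mono inter_subset_left)
    rw [hvolA]; exact ENNReal.ofReal_ne_top
  have hdiff : volume (A \ B) = volume (B \ A) := by
    have h1 := measure_inter_add_diff (μ := volume) A hB
    have h2 := measure_inter_add_diff (μ := volume) B hA
    rw [inter_comm B A] at h2
    rw [hvolA] at h1
    rw [hvolB] at h2
    rw [← h2] at h1
    exact (ENNReal.add_right_inj hfin).mp h1
  have hAB : ∀ x ∈ A \ B, ENNReal.ofReal (f x) ≤ ENNReal.ofReal (f c) := by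
    rintro x ⟨-, hxB⟩
    have habs : c < |x| := by
      simp only [B, mem_Icc, not_and_or, not_le] at hxB
      rcases hxB with h | h
      · calc c < -x := by linarith
        _ ≤ |x| := neg_le_abs x
      · exact lt_of_lt_of_le h (le_abs_self x)
    rw [stmt1_f_abs hf_even x]
    exact ENNReal.ofReal_le_ofReal (hf_anti hc (le_trans hc habs.le) habs.le)
  have hBA : ∀ x ∈ B \ A, ENNReal.ofReal (f c) ≤ ENNReal.ofReal (f x) := by
    rintro x ⟨hxB, -⟩
    have habs : |x| ≤ c := abs_le.mpr hxB
    rw [stmt1_f_abs hf_even x]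
    exact ENNReal.ofReal_le_ofReal (hf_anti (abs_nonneg x) hc habs)
  have key : ν (A \ B) ≤ ν (B \ A) := by
    rw [hν, withDensity_apply _ (hA.diff hB), withDensity_apply _ (hB.diff hA)]
    calc ∫⁻ x in A \ B, ENNReal.ofReal (f x) ∂volume
        ≤ ∫⁻ _x in A \ B, ENNReal.ofReal (f c) ∂volume :=
          setLIntegral_mono' (hA.diff hB) hAB
      _ = ENNReal.ofReal (f c) * volume (A \ B) := by rw [setLIntegral_const]
      _ = ENNReal.ofReal (f c) * volume (B \ A) := by rw [hdiff]
      _ = ∫⁻ _x in B \ A, ENNReal.ofReal (f c) ∂volume := by rw [setLIntegral_const]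
      _ ≤ ∫⁻ x in B \ A, ENNReal.ofReal (f x) ∂volume :=
          setLIntegral_mono' (hB.diff hA) hBA
  calc ν A = ν (A ∩ B) + ν (A \ B) := (measure_inter_add_diff A hB).symm
    _ ≤ ν (B ∩ A) + ν (B \ A) := by rw [inter_comm]; exact add_le_add le_rfl key
    _ = ν B := measure_inter_add_diff B hA


/-- If W has an even density f nonincreasing on [0,∞) and ρ satisfies (A3),
then for every α ∈ ℝ and s > 0, E[ρ((W − α)/s)] ≥ E[ρ(W/s)]. -/
theorem stmt1 (ρ : ℝ → ℝ)
    (hρ_meas : Measurable ρ)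
    (hρ_even : ∀ u, ρ (-u) = ρ u)
    (hρ_mono : MonotoneOn ρ (Set.Ici 0))
    (hρ_zero : ρ 0 = 0)
    (hρ_bdd : ∀ u, 0 ≤ ρ u ∧ ρ u ≤ 1)
    (hρ_lim : Tendsto ρ atTop (nhds 1))
    (f : ℝ → ℝ)
    (hf_meas : Measurable f)
    (hf_nonneg : ∀ x, 0 ≤ f x)
    (hf_even : ∀ x, f (-x) = f x)
    (hf_anti : AntitoneOn f (Set.Ici 0))
    (μ : Measure ℝ)
    (hμ : μ = volume.withDensity fun x => ENNReal.ofReal (f x))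
    (hμ_prob : IsProbabilityMeasure μ)
    (α s : ℝ) (hs : 0 < s) :
    ∫ w, ρ (w / s) ∂μ ≤ ∫ w, ρ ((w - α) / s) ∂μ := by
  have hcore : ∀ c α' : ℝ, 0 ≤ c → μ (Icc (α' - c) (α' + c)) ≤ μ (Icc (-c) c) := by
    intro c α' hc
    rw [hμ]
    exact stmt1_core f hf_even hf_anti c α' hc
  have hg₁m : Measurable fun w : ℝ => ρ (w / s) :=
    hρ_meas.comp (measurable_id.div_const s)
  have hg₂m : Measurable fun w : ℝ => ρ ((w - α) / s) :=
    hρ_meas.comp ((measurable_id.sub_const α).div_const s)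
  have hnull : ∀ x : ℝ, μ {x} = 0 := by
    intro x
    rw [hμ]
    exact (withDensity_absolutelyContinuous volume _) (measure_singleton x)
  have hIccIoo : ∀ a b : ℝ, μ (Icc a b) ≤ μ (Ioo a b) := by
    intro a b
    have hsub : Icc a b ⊆ (Ioo a b ∪ {a}) ∪ {b} := by
      intro x hx
      rcases eq_or_ne x a with rfl | hxa
      · exact Or.inl (Or.inr rfl)
      rcases eq_or_ne x b with rfl | hxb
      · exact Or.inr rfl
      exact Or.inl (Or.inl ⟨lt_of_le_of_ne hx.1 (Ne.symm hxa), lt_of_le_of_ne hx.2 hxb⟩)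
    calc μ (Icc a b) ≤ μ ((Ioo a b ∪ {a}) ∪ {b}) := measure_mono hsub
      _ ≤ μ (Ioo a b ∪ {a}) + μ {b} := measure_union_le _ _
      _ ≤ μ (Ioo a b) + μ {a} + μ {b} := by
          exact add_le_add (measure_union_le _ _) le_rfl
      _ = μ (Ioo a b) := by rw [hnull a, hnull b, add_zero, add_zero]
  -- key measure comparison
  have measkey : ∀ t ∈ Ioi (0:ℝ),
      μ {w : ℝ | t < ρ (w / s)} ≤ μ {w : ℝ | t < ρ ((w - α) / s)} := by
    intro t ht
    simp only [mem_Ioi] at ht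
    rcases le_or_gt 1 t with ht1 | ht1
    · have hempty : {w : ℝ | t < ρ (w / s)} = ∅ := by
        ext w
        simp only [mem_setOf_eq, mem_empty_iff_false, iff_false, not_lt]
        exact le_trans (hρ_bdd _).2 ht1
      rw [hempty]
      simp
    · set K : Set ℝ := {w : ℝ | ρ (w / s) ≤ t} with hKdef
      have hK0 : (0:ℝ) ∈ K := by
        simp only [hKdef, mem_setOf_eq, zero_div, hρ_zero]
        exact ht.le
      have hρabs : ∀ w : ℝ, ρ (w / s) = ρ (|w| / s) := by
        intro w
        rw [stmt1_f_abs hρ_even (w / s), abs_div, abs_of_pos hs]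
      have hKsolid : ∀ w w' : ℝ, |w| ≤ |w'| → w' ∈ K → w ∈ K := by
        intro w w' hle hw'
        simp only [hKdef, mem_setOf_eq] at *
        rw [hρabs w]
        have hd : |w| / s ≤ |w'| / s := by gcongr
        calc ρ (|w| / s)
            ≤ ρ (|w'| / s) := hρ_mono (div_nonneg (abs_nonneg w) hs.le)
              (div_nonneg (abs_nonneg w') hs.le) hd
          _ = ρ (w' / s) := (hρabs w').symm
          _ ≤ t := hw'
      have hKsym : ∀ w : ℝ, w ∈ K → -w ∈ K := by
        intro w hw
        have : |(-w)| ≤ |w| := by rw [abs_neg]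
        exact hKsolid _ _ this hw
      have hbdd : BddAbove K := by
        have hev : ∀ᶠ u in atTop, t < ρ u := hρ_lim.eventually (eventually_gt_nhds ht1)
        obtain ⟨M, hM⟩ := eventually_atTop.mp hev
        refine ⟨s * M, fun w hw => ?_⟩
        by_contra hcon
        push_neg at hcon
        have hMw : M ≤ w / s := by
          rw [le_div_iff₀ hs]
          nlinarith
        exact absurd hw (not_le.mpr (hM _ hMw))
      set c : ℝ := sSup K with hcdef
      have hc0 : 0 ≤ c := le_csSup hbdd hK0
      have hKIcc : K ⊆ Icc (-c) c := by
        intro w hw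
        constructor
        · have := le_csSup hbdd (hKsym w hw)
          linarith
        · exact le_csSup hbdd hw
      have hIooK : Ioo (-c) c ⊆ K := by
        intro w hw
        have habs : |w| < c := abs_lt.mpr ⟨hw.1, hw.2⟩
        obtain ⟨w', hw'K, hw'⟩ := exists_lt_of_lt_csSup ⟨0, hK0⟩ habs
        have : |w| ≤ |w'| := le_trans hw'.le (le_abs_self w')
        exact hKsolid _ _ this hw'K
      -- identify complements
      have hc₁ : {w : ℝ | t < ρ (w / s)}ᶜ = K := by
        ext w; simp [hKdef, not_lt]
      have hc₂ : {w : ℝ | t < ρ ((w - α) / s)}ᶜ = {w : ℝ | w - α ∈ K} := by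
        ext w; simp [hKdef, not_lt]
      have hsub₂ : {w : ℝ | w - α ∈ K} ⊆ Icc (α - c) (α + c) := by
        intro w hw
        have := hKIcc hw
        simp only [mem_Icc] at *
        constructor <;> linarith [this.1, this.2]
      have hsub₁ : Ioo (-c) c ⊆ K := hIooK
      -- measure of complements
      have hcompl : μ {w : ℝ | t < ρ ((w - α) / s)}ᶜ ≤ μ {w : ℝ | t < ρ (w / s)}ᶜ := by
        rw [hc₁, hc₂]
        calc μ {w : ℝ | w - α ∈ K} ≤ μ (Icc (α - c) (α + c)) := measure_mono hsub₂
          _ ≤ μ (Icc (-c) c) := hcore c α hc0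
          _ ≤ μ (Ioo (-c) c) := hIccIoo _ _
          _ ≤ μ K := measure_mono hIooK
      have hS₁ : MeasurableSet {w : ℝ | t < ρ (w / s)} :=
        measurableSet_lt measurable_const hg₁m
      have hS₂ : MeasurableSet {w : ℝ | t < ρ ((w - α) / s)} :=
        measurableSet_lt measurable_const hg₂m
      have h1 := measure_add_measure_compl (μ := μ) hS₁
      have h2 := measure_add_measure_compl (μ := μ) hS₂
      have hkey : μ {w : ℝ | t < ρ (w / s)} + μ {w : ℝ | t < ρ ((w - α) / s)}ᶜ
          ≤ μ {w : ℝ | t < ρ ((w - α) / s)} + μ {w : ℝ | t < ρ ((w - α) / s)}ᶜ := by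
        calc μ {w : ℝ | t < ρ (w / s)} + μ {w : ℝ | t < ρ ((w - α) / s)}ᶜ
            ≤ μ {w : ℝ | t < ρ (w / s)} + μ {w : ℝ | t < ρ (w / s)}ᶜ :=
              add_le_add_right hcompl _
          _ = μ univ := h1
          _ = μ {w : ℝ | t < ρ ((w - α) / s)} + μ {w : ℝ | t < ρ ((w - α) / s)}ᶜ :=
              h2.symm
      exact (ENNReal.add_le_add_iff_right (measure_ne_top μ _)).mp hkey
  -- layer cake
  have nn₁ : 0 ≤ᵐ[μ] fun w : ℝ => ρ (w / s) := Filter.Eventually.of_forall fun w => (hρ_bdd _).1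
  have nn₂ : 0 ≤ᵐ[μ] fun w : ℝ => ρ ((w - α) / s) :=
    Filter.Eventually.of_forall fun w => (hρ_bdd _).1
  have lkey : ∫⁻ w, ENNReal.ofReal (ρ (w / s)) ∂μ
      ≤ ∫⁻ w, ENNReal.ofReal (ρ ((w - α) / s)) ∂μ := by
    rw [lintegral_eq_lintegral_meas_lt μ nn₁ hg₁m.aemeasurable,
      lintegral_eq_lintegral_meas_lt μ nn₂ hg₂m.aemeasurable]
    exact setLIntegral_mono' measurableSet_Ioi measkey
  have fin : ∀ g : ℝ → ℝ, (∀ u, g u ≤ 1) → (∫⁻ w, ENNReal.ofReal (g w) ∂μ) ≠ ⊤ := by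
    intro g hg
    have : (∫⁻ w, ENNReal.ofReal (g w) ∂μ) ≤ ∫⁻ _w, 1 ∂μ :=
      lintegral_mono fun w => ENNReal.ofReal_le_one.mpr (hg w)
    rw [lintegral_one, measure_univ] at this
    exact ne_top_of_le_ne_top ENNReal.one_ne_top this
  rw [integral_eq_lintegral_of_nonneg_ae nn₁ hg₁m.aestronglyMeasurable,
    integral_eq_lintegral_of_nonneg_ae nn₂ hg₂m.aestronglyMeasurable]
  exact ENNReal.toReal_mono (fin _ fun u => (hρ_bdd _).2) lkey
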